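/- Let n ≥ 1 and let F = diag(f₁, …, fₙ) be a real diagonal matrix with fᵢ > 0 for all i. Then every complex eigenvalue of the matrix Iₙ + B·F is a positive real number; moreover Iₙ + B·F is similar over ℝ to the symmetric positive definite matrix Iₙ + √F·B·√F, where √F = diag(√f₁, …, √fₙ). -/

import Mathlib

open Matrix Polynomial

noncomputable section

/-- The `n × n` tridiagonal matrix `B` of the Marx generator. -/
def marxB (n : ℕ) : Matrix (Fin n) (Fin n) ℝ :=
  Matrix.of fun i j =>
    if i = j then (if (i : ℕ) = n - 1 then ((n : ℝ) + 1) / n else 2)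
    else if (i : ℕ) + 1 = (j : ℕ) ∨ (j : ℕ) + 1 = (i : ℕ) then -1 else 0

/-- Auxiliary upper shift matrix. -/
def shiftU (m : ℕ) : Matrix (Fin (m+1)) (Fin (m+1)) ℝ :=
  Matrix.of fun i j => if (i : ℕ) + 1 = (j : ℕ) then 1 else 0

lemma marxB_decomp (m : ℕ) :
    marxB (m+1) = Matrix.diagonal (fun i : Fin (m+1) =>
        if (i : ℕ) = m then ((m : ℝ) + 2) / ((m : ℝ) + 1) else 2)
      - (shiftU m + (shiftU m)ᵀ) := by
  ext i j
  by_cases hij : i = j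
  · subst hij
    simp [marxB, shiftU, Matrix.diagonal]
    ring_nf
  · have hij' : (i : ℕ) ≠ (j : ℕ) := fun h => hij (Fin.ext h)
    simp [marxB, shiftU, Matrix.diagonal, hij, hij']
    split_ifs <;> simp_all <;> omega

lemma key_bilinear {K : Type*} [CommRing K] [Algebra ℝ K] (m : ℕ) (y x : Fin (m+1) → K) :
    y ⬝ᵥ ((marxB (m+1)).map (algebraMap ℝ K) *ᵥ x) =
      y 0 * x 0 + algebraMap ℝ K (1 / ((m : ℝ) + 1)) * (y (Fin.last m) * x (Fin.last m))
        + ∑ k : Fin m, (y k.succ - y k.castSucc) * (x k.succ - x k.castSucc) := by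
  have hU : ∀ z : Fin (m+1) → K,
      ((shiftU m).map (algebraMap ℝ K) *ᵥ z) = fun i : Fin (m+1) =>
        if h : (i : ℕ) < m then z ⟨(i : ℕ) + 1, by omega⟩ else 0 := by
    intro z
    funext i
    simp only [Matrix.mulVec, dotProduct, Matrix.map_apply, shiftU, Matrix.of_apply]
    by_cases h : (i : ℕ) < m
    · rw [dif_pos h]
      rw [Finset.sum_eq_single (⟨(i : ℕ) + 1, by omega⟩ : Fin (m+1))]
      · simp
      · intro j _ hj
        have : (i : ℕ) + 1 ≠ (j : ℕ) := by
          intro hh; exact hj (Fin.ext hh.symm)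
        simp [this]
      · simp
    · rw [dif_neg h]
      apply Finset.sum_eq_zero
      intro j _
      have : (i : ℕ) + 1 ≠ (j : ℕ) := by omega
      simp [this]
  have hsplit : (marxB (m+1)).map (algebraMap ℝ K) =
      Matrix.diagonal (fun i : Fin (m+1) =>
        algebraMap ℝ K (if (i : ℕ) = m then ((m : ℝ) + 2) / ((m : ℝ) + 1) else 2))
      - ((shiftU m).map (algebraMap ℝ K) + ((shiftU m).map (algebraMap ℝ K))ᵀ) := by
    rw [marxB_decomp]
    ext i j
    by_cases hij : i = j <;>
      simp [Matrix.diagonal, hij, Matrix.map_apply, apply_ite (algebraMap ℝ K)]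
  rw [hsplit, Matrix.sub_mulVec, Matrix.add_mulVec, dotProduct_sub,
    dotProduct_add]
  have hdiag : y ⬝ᵥ (Matrix.diagonal (fun i : Fin (m+1) =>
      algebraMap ℝ K (if (i : ℕ) = m then ((m : ℝ) + 2) / ((m : ℝ) + 1) else 2)) *ᵥ x)
      = 2 * (∑ k : Fin m, y k.castSucc * x k.castSucc)
        + algebraMap ℝ K (((m : ℝ) + 2) / ((m : ℝ) + 1)) *
          (y (Fin.last m) * x (Fin.last m)) := by
    simp only [dotProduct, Matrix.mulVec_diagonal]
    rw [Fin.sum_univ_castSucc, Finset.mul_sum]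
    congr 1
    · apply Finset.sum_congr rfl
      intro k _
      have : ((k.castSucc : Fin (m+1)) : ℕ) ≠ m := by
        have := k.is_lt; simp [Fin.coe_castSucc]; omega
      rw [if_neg this, map_ofNat]; ring
    · rw [if_pos (by simp)]; ring
  have hUx : y ⬝ᵥ ((shiftU m).map (algebraMap ℝ K) *ᵥ x)
      = ∑ k : Fin m, y k.castSucc * x k.succ := by
    rw [hU x]
    show (∑ i : Fin (m+1), y i * _) = _
    rw [Fin.sum_univ_castSucc]
    have hlast : ¬ ((Fin.last m : Fin (m+1)) : ℕ) < m := by simp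
    rw [dif_neg hlast, mul_zero, add_zero]
    apply Finset.sum_congr rfl
    intro k _
    have hk : ((k.castSucc : Fin (m+1)) : ℕ) < m := by simp [Fin.coe_castSucc, k.is_lt]
    rw [dif_pos hk]
    congr 1
  have hUTx : y ⬝ᵥ (((shiftU m).map (algebraMap ℝ K))ᵀ *ᵥ x)
      = ∑ k : Fin m, y k.succ * x k.castSucc := by
    rw [Matrix.mulVec_transpose, dotProduct_comm, ← Matrix.dotProduct_mulVec, hU y]
    show (∑ i : Fin (m+1), x i * _) = _
    rw [Fin.sum_univ_castSucc]
    have hlast : ¬ ((Fin.last m : Fin (m+1)) : ℕ) < m := by simp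
    rw [dif_neg hlast, mul_zero, add_zero]
    apply Finset.sum_congr rfl
    intro k _
    have hk : ((k.castSucc : Fin (m+1)) : ℕ) < m := by simp [Fin.coe_castSucc, k.is_lt]
    rw [dif_pos hk, mul_comm]
    congr 1
  rw [hdiag, hUx, hUTx]
  have hexp : ∑ k : Fin m, (y k.succ - y k.castSucc) * (x k.succ - x k.castSucc)
      = (∑ k : Fin m, y k.succ * x k.succ) + (∑ k : Fin m, y k.castSucc * x k.castSucc)
        - (∑ k : Fin m, y k.castSucc * x k.succ) - (∑ k : Fin m, y k.succ * x k.castSucc) := by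
    rw [← Finset.sum_add_distrib, ← Finset.sum_sub_distrib, ← Finset.sum_sub_distrib]
    exact Finset.sum_congr rfl (fun k _ => by ring)
  rw [hexp]
  have h1 : ∑ k : Fin m, y k.succ * x k.succ
      = (∑ i : Fin (m+1), y i * x i) - y 0 * x 0 := by
    rw [Fin.sum_univ_succ]; ring
  have h2 : ∑ k : Fin m, y k.castSucc * x k.castSucc
      = (∑ i : Fin (m+1), y i * x i) - y (Fin.last m) * x (Fin.last m) := by
    rw [Fin.sum_univ_castSucc]; ring
  have hc : algebraMap ℝ K (((m : ℝ) + 2) / ((m : ℝ) + 1))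
      = algebraMap ℝ K (1 / ((m : ℝ) + 1)) + 1 := by
    rw [show (1:K) = algebraMap ℝ K 1 from (_root_.map_one _).symm, ← map_add]
    congr 1
    have hm : (m : ℝ) + 1 ≠ 0 := by positivity
    field_simp
    ring
  rw [h1, h2, hc]
  ring

lemma marxB_map_id (m : ℕ) : (marxB (m+1)).map (algebraMap ℝ ℝ) = marxB (m+1) := by
  ext i j; simp

/-- real quadratic form of `marxB` -/
lemma marxB_quadform (m : ℕ) (x : Fin (m+1) → ℝ) :
    x ⬝ᵥ (marxB (m+1) *ᵥ x) =
      x 0 * x 0 + (1 / ((m : ℝ) + 1)) * (x (Fin.last m) * x (Fin.last m))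
        + ∑ k : Fin m, (x k.succ - x k.castSucc) * (x k.succ - x k.castSucc) := by
  have := key_bilinear (K := ℝ) m x x
  rwa [marxB_map_id] at this

lemma marxB_quadform_nonneg (m : ℕ) (x : Fin (m+1) → ℝ) :
    0 ≤ x ⬝ᵥ (marxB (m+1) *ᵥ x) := by
  rw [marxB_quadform]
  have h1 : 0 ≤ x 0 * x 0 := mul_self_nonneg _
  have h2 : 0 ≤ (1 / ((m : ℝ) + 1)) * (x (Fin.last m) * x (Fin.last m)) := by
    apply mul_nonneg (by positivity) (mul_self_nonneg _)
  have h3 : 0 ≤ ∑ k : Fin m, (x k.succ - x k.castSucc) * (x k.succ - x k.castSucc) :=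
    Finset.sum_nonneg (fun k _ => mul_self_nonneg _)
  linarith

/-- complex quadratic form of `marxB` is a nonnegative real -/
lemma marxB_quadform_complex (m : ℕ) (w : Fin (m+1) → ℂ) :
    ∃ c : ℝ, 0 ≤ c ∧
      star w ⬝ᵥ ((marxB (m+1)).map (algebraMap ℝ ℂ) *ᵥ w) = (c : ℂ) := by
  refine ⟨Complex.normSq (w 0) + (1 / ((m : ℝ) + 1)) * Complex.normSq (w (Fin.last m))
    + ∑ k : Fin m, Complex.normSq (w k.succ - w k.castSucc), ?_, ?_⟩
  · have h2 : 0 ≤ (1 / ((m : ℝ) + 1)) * Complex.normSq (w (Fin.last m)) :=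
      mul_nonneg (by positivity) (Complex.normSq_nonneg _)
    have h3 : 0 ≤ ∑ k : Fin m, Complex.normSq (w k.succ - w k.castSucc) :=
      Finset.sum_nonneg (fun k _ => Complex.normSq_nonneg _)
    have h1 := Complex.normSq_nonneg (w 0)
    linarith
  · rw [key_bilinear]
    have hconj : ∀ z : ℂ, (starRingEnd ℂ) z * z = (Complex.normSq z : ℂ) := by
      intro z
      rw [mul_comm, Complex.mul_conj]
    push_cast
    simp only [Pi.star_apply, Complex.star_def]
    rw [← Complex.ofReal_one, ← Complex.ofReal_natCast]
    push_cast
    rw [hconj]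
    congr 1
    · congr 1
      rw [hconj]
    · apply Finset.sum_congr rfl
      intro k _
      rw [← map_sub (starRingEnd ℂ), hconj]

lemma eval_charpoly {k : ℕ} (N : Matrix (Fin k) (Fin k) ℂ) (μ : ℂ) :
    N.charpoly.eval μ = (Matrix.scalar (Fin k) μ - N).det := by
  rw [Matrix.charpoly, eval_det, matPolyEquiv_charmatrix]
  rw [Polynomial.eval_sub, Polynomial.eval_X, Polynomial.eval_C]

/-- for a positive diagonal `F = diag f`, every complex eigenvalue
of `I + B·F` is a positive real, and `I + B·F` is similar over ℝ to the
symmetric positive definite matrix `I + √F·B·√F`. -/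
theorem statement4 (n : ℕ) (hn : 1 ≤ n) (f : Fin n → ℝ) (hf : ∀ i, 0 < f i) :
    (∀ μ : ℂ,
      (((1 + marxB n * Matrix.diagonal f).charpoly.map (algebraMap ℝ ℂ)).IsRoot μ →
        ∃ r : ℝ, 0 < r ∧ μ = (r : ℂ))) ∧
    (∃ P : Matrix (Fin n) (Fin n) ℝ, IsUnit P.det ∧
      P * (1 + marxB n * Matrix.diagonal f) * P⁻¹ =
        1 + Matrix.diagonal (fun i => Real.sqrt (f i)) * marxB n *
          Matrix.diagonal (fun i => Real.sqrt (f i))) ∧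
    (1 + Matrix.diagonal (fun i => Real.sqrt (f i)) * marxB n *
        Matrix.diagonal (fun i => Real.sqrt (f i))).IsSymm ∧
    (1 + Matrix.diagonal (fun i => Real.sqrt (f i)) * marxB n *
        Matrix.diagonal (fun i => Real.sqrt (f i))).PosDef := by
  obtain ⟨m, rfl⟩ : ∃ m, n = m + 1 := ⟨n - 1, (Nat.succ_pred_eq_of_pos hn).symm⟩
  set d : Fin (m+1) → ℝ := fun i => Real.sqrt (f i) with hd_def
  have hd : ∀ i, 0 < d i := fun i => Real.sqrt_pos.2 (hf i)
  set D : Matrix (Fin (m+1)) (Fin (m+1)) ℝ := Matrix.diagonal d with hD_def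
  set Dinv : Matrix (Fin (m+1)) (Fin (m+1)) ℝ := Matrix.diagonal (fun i => (d i)⁻¹)
    with hDinv_def
  set B : Matrix (Fin (m+1)) (Fin (m+1)) ℝ := marxB (m+1) with hB_def
  set M : Matrix (Fin (m+1)) (Fin (m+1)) ℝ := 1 + B * Matrix.diagonal f with hM_def
  set S : Matrix (Fin (m+1)) (Fin (m+1)) ℝ := 1 + D * B * D with hS_def
  have hDD : D * D = Matrix.diagonal f := by
    rw [hD_def, Matrix.diagonal_mul_diagonal]
    exact congrArg _ (funext fun i => Real.mul_self_sqrt (hf i).le)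
  have hDinvD : Dinv * D = 1 := by
    rw [hDinv_def, hD_def, Matrix.diagonal_mul_diagonal, ← Matrix.diagonal_one]
    exact congrArg _ (funext fun i => inv_mul_cancel₀ (hd i).ne')
  have hDDinv : D * Dinv = 1 := by
    rw [hDinv_def, hD_def, Matrix.diagonal_mul_diagonal, ← Matrix.diagonal_one]
    exact congrArg _ (funext fun i => mul_inv_cancel₀ (hd i).ne')
  have hMS : Dinv * S * D = M := by
    have h1 : Dinv * S * D = Dinv * D + (Dinv * D) * B * (D * D) := by
      rw [hS_def]; noncomm_ring
    rw [h1, hDinvD, hDD, one_mul, hM_def]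
  -- symmetry of B
  have hBsymm : Bᵀ = B := by
    rw [hB_def]
    ext i j
    simp only [Matrix.transpose_apply, marxB, Matrix.of_apply]
    by_cases h : i = j
    · subst h; rfl
    · have h' : ¬ j = i := fun hh => h hh.symm
      rw [if_neg h, if_neg h']
      simp only [or_comm]
  have hSsymm : S.IsSymm := by
    rw [Matrix.IsSymm, hS_def, Matrix.transpose_add, Matrix.transpose_one,
      Matrix.transpose_mul, Matrix.transpose_mul, hD_def, Matrix.diagonal_transpose, hBsymm]
    rw [Matrix.mul_assoc]
  -- quadratic form over ℝ
  have hDdot : ∀ u v : Fin (m+1) → ℝ, u ⬝ᵥ (D *ᵥ v) = (D *ᵥ u) ⬝ᵥ v := by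
    intro u v
    simp only [dotProduct, hD_def, Matrix.mulVec_diagonal]
    exact Finset.sum_congr rfl (fun i _ => by ring)
  have hSposdef : S.PosDef := by
    rw [Matrix.posDef_iff_dotProduct_mulVec]
    constructor
    · rw [Matrix.IsHermitian, Matrix.conjTranspose_eq_transpose_of_trivial]
      exact hSsymm
    · intro x hx
      have hstar : star x = x := by
        funext i; simp
      rw [hstar, hS_def, Matrix.add_mulVec, Matrix.one_mulVec, dotProduct_add]
      rw [← Matrix.mulVec_mulVec, ← Matrix.mulVec_mulVec, hDdot]
      have h1 : 0 < x ⬝ᵥ x := by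
        have := Matrix.dotProduct_self_star_pos_iff (v := x) (n := Fin (m+1))
        rw [show star x = x from funext fun i => by simp] at this
        exact this.2 hx
      have h2 : 0 ≤ (D *ᵥ x) ⬝ᵥ (B *ᵥ (D *ᵥ x)) := by
        rw [hB_def]
        exact marxB_quadform_nonneg m (D *ᵥ x)
      linarith
  refine ⟨?_, ⟨D, ?_, ?_⟩, hSsymm, hSposdef⟩
  · -- eigenvalues
    intro μ hroot
    rw [← Matrix.charpoly_map] at hroot
    have hdet0 : (Matrix.scalar (Fin (m+1)) μ - M.map (algebraMap ℝ ℂ)).det = 0 := by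
      rw [← _root_.eval_charpoly]
      exact hroot
    set φ := algebraMap ℝ ℂ
    have hmapmul : ∀ X Y : Matrix (Fin (m+1)) (Fin (m+1)) ℝ,
        (X * Y).map φ = X.map φ * Y.map φ := fun X Y => Matrix.map_mul
    have hmapone : (1 : Matrix (Fin (m+1)) (Fin (m+1)) ℝ).map φ = 1 :=
      Matrix.map_one φ (map_zero φ) (map_one φ)
    have hDinvDC : Dinv.map φ * D.map φ = 1 := by
      rw [← hmapmul, hDinvD, hmapone]
    have hfactor : Matrix.scalar (Fin (m+1)) μ - M.map φ =
        Dinv.map φ * (Matrix.scalar (Fin (m+1)) μ - S.map φ) * D.map φ := by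
      rw [mul_sub, sub_mul]
      congr 1
      · have hsc : Matrix.scalar (Fin (m+1)) μ = μ • (1 : Matrix (Fin (m+1)) (Fin (m+1)) ℂ) := by
          ext i j
          simp only [Matrix.scalar_apply, Matrix.diagonal_apply, Matrix.smul_apply,
            Matrix.one_apply, smul_eq_mul]
          split_ifs <;> simp
        rw [hsc, mul_smul_comm, mul_one, smul_mul_assoc, hDinvDC]
      · rw [← hmapmul, ← hmapmul, hMS]
    have hdetS : (Matrix.scalar (Fin (m+1)) μ - S.map φ).det = 0 := by
      have hprod : (Dinv.map φ).det * (D.map φ).det = 1 := by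
        rw [← Matrix.det_mul, hDinvDC, Matrix.det_one]
      have : (Matrix.scalar (Fin (m+1)) μ - M.map φ).det =
          (Matrix.scalar (Fin (m+1)) μ - S.map φ).det *
            ((Dinv.map φ).det * (D.map φ).det) := by
        rw [hfactor, Matrix.det_mul, Matrix.det_mul]; ring
      rw [hprod, mul_one] at this
      rw [← this, hdet0]
    obtain ⟨v, hv, hveq⟩ := (Matrix.exists_mulVec_eq_zero_iff).2 hdetS
    have hSv : (S.map φ) *ᵥ v = μ • v := by
      have h1 : Matrix.scalar (Fin (m+1)) μ *ᵥ v - (S.map φ) *ᵥ v = 0 := by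
        rw [← Matrix.sub_mulVec, hveq]
      have h2 : Matrix.scalar (Fin (m+1)) μ *ᵥ v = μ • v := by
        funext i
        simp [Matrix.scalar_apply, Matrix.mulVec_diagonal]
      rw [h2] at h1
      exact (sub_eq_zero.1 h1).symm
    -- compute the quadratic form
    set w : Fin (m+1) → ℂ := (D.map φ) *ᵥ v with hw_def
    have hDdotC : ∀ u : Fin (m+1) → ℂ,
        star v ⬝ᵥ ((D.map φ) *ᵥ u) = star ((D.map φ) *ᵥ v) ⬝ᵥ u := by
      intro u
      simp only [dotProduct, Pi.star_apply, hD_def, Matrix.diagonal_map (map_zero φ),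
        Matrix.mulVec_diagonal, Function.comp]
      apply Finset.sum_congr rfl
      intro i _
      have : star (φ (d i)) = φ (d i) := by
        simp [φ, Complex.star_def, Complex.conj_ofReal]
      rw [star_mul', this]
      ring
    have hSC : S.map φ = 1 + (D.map φ) * ((B.map φ) * (D.map φ)) := by
      rw [hS_def, Matrix.map_add ⇑φ (map_add φ), hmapone, hmapmul, hmapmul, Matrix.mul_assoc]
    have hq : star v ⬝ᵥ ((S.map φ) *ᵥ v) = star v ⬝ᵥ v + star w ⬝ᵥ ((B.map φ) *ᵥ w) := by
      rw [hSC, Matrix.add_mulVec, Matrix.one_mulVec, dotProduct_add]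
      congr 1
      rw [← Matrix.mulVec_mulVec, ← Matrix.mulVec_mulVec, hDdotC, ← hw_def,
        Matrix.mulVec_mulVec]
    obtain ⟨c, hc0, hcval⟩ := marxB_quadform_complex m w
    set tr : ℝ := ∑ i, Complex.normSq (v i) with htr_def
    have htr : star v ⬝ᵥ v = (tr : ℂ) := by
      rw [htr_def]
      push_cast
      apply Finset.sum_congr rfl
      intro i _
      simp [mul_comm, Complex.mul_conj]
    have htrpos : 0 < tr := by
      obtain ⟨i, hi⟩ := Function.ne_iff.1 hv
      exact Finset.sum_pos' (fun j _ => Complex.normSq_nonneg _)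
        ⟨i, Finset.mem_univ i, Complex.normSq_pos.2 hi⟩
    have heq : μ * (tr : ℂ) = (tr : ℂ) + (c : ℂ) := by
      have h1 : star v ⬝ᵥ ((S.map φ) *ᵥ v) = μ * (tr : ℂ) := by
        rw [hSv, dotProduct_smul, htr, smul_eq_mul]
      have h2 : star v ⬝ᵥ ((S.map φ) *ᵥ v) = (tr : ℂ) + (c : ℂ) := by
        rw [hq, htr, hB_def, hcval]
      rw [← h1, h2]
    refine ⟨(tr + c) / tr, by positivity, ?_⟩
    have htrne : (tr : ℂ) ≠ 0 := by
      exact_mod_cast htrpos.ne'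
    push_cast
    field_simp
    linear_combination heq
  · -- IsUnit det
    rw [hD_def, Matrix.det_diagonal]
    exact isUnit_iff_ne_zero.2 (Finset.prod_pos (fun i _ => hd i)).ne'
  · -- similarity
    have hDinv' : D⁻¹ = Dinv := Matrix.inv_eq_right_inv hDDinv
    rw [hDinv']
    have : D * M * Dinv = (D * Dinv) * S * (D * Dinv) := by
      rw [← hMS]; noncomm_ring
    rw [hM_def] at this
    rw [this, hDDinv, one_mul, mul_one, hS_def]

end
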